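/- There exist constants C > 0 and x₀ such that for all real x ≥ x₀: ∑ 1/φ(a·c·u·m − 1) ≤ C (log x)⁴, where the sum is over all quadruples of positive integers (a, c, u, m) with 2 ≤ a·c·u·m ≤ x. -/

import Mathlib

open Finset

namespace SumInvTotientAux

lemma harm_Icc (N : ℕ) : ∑ j ∈ Icc 1 N, (1:ℝ)/j ≤ 1 + Real.log N := by
  have h := harmonic_le_one_add_log N
  have e : ((harmonic N : ℚ) : ℝ) = ∑ j ∈ Icc 1 N, (1:ℝ)/j := by
    rw [harmonic]
    push_cast
    rw [show Icc 1 N = Ico 1 (N+1) by rfl, Finset.sum_Ico_eq_sum_range]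
    simp [one_div, add_comm]
  linarith [e ▸ h]

lemma sumsq_helper (N : ℕ) (hN : 1 ≤ N) :
    ∑ j ∈ Icc 1 N, (1:ℝ)/(j*j) ≤ 2 - 1/N := by
  induction N with
  | zero => omega
  | succ n ih =>
    rcases Nat.eq_zero_or_pos n with h0 | hn
    · subst h0; norm_num
    rw [show Icc 1 (n+1) = insert (n+1) (Icc 1 n) from
        (Finset.insert_Icc_right_eq_Icc_add_one (by omega)).symm, Finset.sum_insert (by simp)]
    have hn' : (1:ℝ) ≤ n := by exact_mod_cast hn
    have key : (1:ℝ)/((n+1)*(n+1)) ≤ 1/n - 1/(n+1) := by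
      rw [div_sub_div _ _ (by positivity) (by positivity)]
      rw [div_le_div_iff₀ (by positivity) (by positivity)]
      nlinarith
    have := ih hn
    push_cast
    push_cast at this
    linarith

lemma sumsq_Icc (N : ℕ) : ∑ j ∈ Icc 1 N, (1:ℝ)/(j*j) ≤ 2 := by
  rcases Nat.eq_zero_or_pos N with h0 | hN
  · subst h0; simp
  refine (sumsq_helper N hN).trans ?_
  have : (0:ℝ) < N := by exact_mod_cast hN
  have : (0:ℝ) ≤ 1/(N:ℝ) := by positivity
  linarith


lemma divisors_eq_filter_Icc {m N : ℕ} (h1 : 1 ≤ m) (h2 : m ≤ N) :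
    m.divisors = (Icc 1 N).filter (· ∣ m) := by
  ext f
  simp only [Nat.mem_divisors, mem_filter, mem_Icc]
  constructor
  · rintro ⟨hf, -⟩
    exact ⟨⟨Nat.pos_of_dvd_of_pos hf (by omega), (Nat.le_of_dvd (by omega) hf).trans h2⟩, hf⟩
  · rintro ⟨-, hf⟩
    exact ⟨hf, by omega⟩

lemma sum_multiples_le {N f : ℕ} (hf : f ∈ Icc 1 N) (g : ℕ → ℝ)
    (hg : ∀ j, 0 ≤ g (f * j)) :
    ∑ e ∈ (Icc 1 N).filter (f ∣ ·), g e ≤ ∑ j ∈ Icc 1 N, g (f * j) := by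
  rw [mem_Icc] at hf
  calc ∑ e ∈ (Icc 1 N).filter (f ∣ ·), g e
      = ∑ e ∈ (Icc 1 N).filter (f ∣ ·), g (f * (e / f)) := by
        refine Finset.sum_congr rfl fun e he => ?_
        rw [mem_filter] at he
        rw [Nat.mul_div_cancel' he.2]
    _ = ∑ j ∈ ((Icc 1 N).filter (f ∣ ·)).image (· / f), g (f * j) := by
        rw [Finset.sum_image]
        intro a ha b hb hab
        rw [mem_coe, mem_filter] at ha hb
        have e1 := Nat.mul_div_cancel' ha.2
        have e2 := Nat.mul_div_cancel' hb.2
        simp only at hab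
        rw [← e1, ← e2, hab]
    _ ≤ ∑ j ∈ Icc 1 N, g (f * j) := by
        refine Finset.sum_le_sum_of_subset_of_nonneg ?_ fun j _ _ => hg j
        intro j hj
        simp only [mem_image, mem_filter, mem_Icc] at hj
        obtain ⟨e, ⟨⟨he1, he2⟩, hfe⟩, rfl⟩ := hj
        rw [mem_Icc]
        constructor
        · have : f ≤ e := Nat.le_of_dvd (by omega) hfe
          exact (Nat.one_le_div_iff (by omega)).2 this
        · exact (Nat.div_le_self _ _).trans he2

lemma swap_divisor_sum (N : ℕ) (g : ℕ → ℕ → ℝ) :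
    ∑ e ∈ Icc 1 N, ∑ f ∈ e.divisors, g e f
      = ∑ f ∈ Icc 1 N, ∑ e ∈ (Icc 1 N).filter (f ∣ ·), g e f := by
  have h1 : ∀ e ∈ Icc 1 N, ∑ f ∈ e.divisors, g e f
      = ∑ f ∈ Icc 1 N, if f ∣ e then g e f else 0 := by
    intro e he
    rw [mem_Icc] at he
    rw [divisors_eq_filter_Icc he.1 he.2, Finset.sum_filter]
  rw [Finset.sum_congr rfl h1, Finset.sum_comm]
  refine Finset.sum_congr rfl fun f _ => ?_
  rw [Finset.sum_filter]

lemma key (n : ℕ) (hn : 0 < n) :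
    (n : ℝ) ≤ (Nat.totient n : ℝ) * ∑ d ∈ n.divisors, 1 / (Nat.totient d : ℝ) := by
  rw [Finset.mul_sum]
  calc (n:ℝ) = ∑ d ∈ n.divisors, (Nat.totient d : ℝ) := by
        exact_mod_cast congrArg (Nat.cast : ℕ → ℝ) (Nat.sum_totient n).symm
    _ = ∑ d ∈ n.divisors, (Nat.totient (n/d) : ℝ) := by
        exact_mod_cast congrArg (Nat.cast : ℕ → ℝ)
          (Nat.sum_div_divisors n Nat.totient).symm
    _ ≤ ∑ d ∈ n.divisors, (Nat.totient n : ℝ) * (1 / (Nat.totient d : ℝ)) := by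
        refine Finset.sum_le_sum fun d hd => ?_
        rw [Nat.mem_divisors] at hd
        have hd0 : 0 < d := Nat.pos_of_dvd_of_pos hd.1 hn
        have htd : (0:ℝ) < (Nat.totient d : ℝ) := by exact_mod_cast Nat.totient_pos.2 hd0
        rw [mul_one_div, le_div_iff₀ htd]
        have h2 : Nat.totient (n/d) * Nat.totient d ≤ Nat.totient (n/d*d) :=
          Nat.totient_super_multiplicative _ _
        rw [Nat.div_mul_cancel hd.1] at h2
        exact_mod_cast h2

lemma sum_inv_mul_totient (N : ℕ) :
    ∑ e ∈ Icc 1 N, (1:ℝ)/(e * Nat.totient e) ≤ 4 := by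
  have step1 : ∀ e ∈ Icc 1 N, (1:ℝ)/(e * Nat.totient e) ≤ ∑ d ∈ e.divisors, 1/((e:ℝ)*e) := by
    intro e he
    rw [mem_Icc] at he
    have he1 : 0 < e := he.1
    have hcard : e ≤ e.divisors.card * e.totient := by
      have : ∀ d ∈ e.divisors, d.totient ≤ e.totient := fun d hd =>
        Nat.le_of_dvd (Nat.totient_pos.2 he1)
          (Nat.totient_dvd_of_dvd (Nat.mem_divisors.1 hd).1)
      calc e = ∑ d ∈ e.divisors, d.totient := (Nat.sum_totient e).symm
        _ ≤ ∑ d ∈ e.divisors, e.totient := Finset.sum_le_sum this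
        _ = e.divisors.card * e.totient := by rw [Finset.sum_const, smul_eq_mul]
    rw [Finset.sum_const, nsmul_eq_mul]
    have hpos1 : (0:ℝ) < (e:ℝ) * e.totient := by
      have := Nat.totient_pos.2 he1
      positivity
    have hpos2 : (0:ℝ) < (e:ℝ) * e := by positivity
    rw [mul_one_div, div_le_div_iff₀ hpos1 hpos2]
    have hc : (e:ℝ) ≤ e.divisors.card * e.totient := by exact_mod_cast hcard
    have hepos : (0:ℝ) < (e:ℝ) := by exact_mod_cast he1
    nlinarith [mul_le_mul_of_nonneg_right hc hepos.le]
  calc ∑ e ∈ Icc 1 N, (1:ℝ)/(e * Nat.totient e)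
      ≤ ∑ e ∈ Icc 1 N, ∑ d ∈ e.divisors, 1/((e:ℝ)*e) := Finset.sum_le_sum step1
    _ = ∑ f ∈ Icc 1 N, ∑ e ∈ (Icc 1 N).filter (f ∣ ·), 1/((e:ℝ)*e) :=
        swap_divisor_sum N (fun e _ => 1/((e:ℝ)*e))
    _ ≤ ∑ f ∈ Icc 1 N, ∑ j ∈ Icc 1 N, 1/(((f*j:ℕ):ℝ)*((f*j:ℕ):ℝ)) := by
        refine Finset.sum_le_sum fun f hf => ?_
        exact sum_multiples_le hf (fun e => 1/((e:ℝ)*e)) (fun j => by positivity)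
    _ = ∑ f ∈ Icc 1 N, (1/((f:ℝ)*f)) * ∑ j ∈ Icc 1 N, 1/((j:ℝ)*j) := by
        refine Finset.sum_congr rfl fun f _ => ?_
        rw [Finset.mul_sum]
        refine Finset.sum_congr rfl fun j _ => ?_
        push_cast
        rw [one_div_mul_one_div]
        ring_nf
    _ ≤ ∑ f ∈ Icc 1 N, (1/((f:ℝ)*f)) * 2 := by
        refine Finset.sum_le_sum fun f _ => ?_
        exact mul_le_mul_of_nonneg_left (sumsq_Icc N) (by positivity)
    _ = (∑ f ∈ Icc 1 N, 1/((f:ℝ)*f)) * 2 := by rw [← Finset.sum_mul]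
    _ ≤ 2 * 2 := by
        exact mul_le_mul_of_nonneg_right (sumsq_Icc N) (by norm_num)
    _ = 4 := by norm_num

lemma sum_inv_totient_le (N : ℕ) :
    ∑ e ∈ Icc 1 N, (1:ℝ)/(Nat.totient e) ≤ 4 * (1 + Real.log N) := by
  have hlog : (0:ℝ) ≤ 1 + Real.log N := by
    rcases Nat.eq_zero_or_pos N with h0 | hN
    · subst h0; simp
    have : (1:ℝ) ≤ N := by exact_mod_cast hN
    have := Real.log_nonneg this
    linarith
  have step1 : ∀ e ∈ Icc 1 N, (1:ℝ)/(Nat.totient e)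
      ≤ ∑ d ∈ e.divisors, 1/((e:ℝ) * Nat.totient d) := by
    intro e he
    rw [mem_Icc] at he
    have he1 : 0 < e := he.1
    have htpos : (0:ℝ) < (Nat.totient e : ℝ) := by exact_mod_cast Nat.totient_pos.2 he1
    have hepos : (0:ℝ) < (e:ℝ) := by exact_mod_cast he1
    have hk := key e he1
    have heq : ∀ d ∈ e.divisors, 1/((e:ℝ) * Nat.totient d) = (1/(e:ℝ)) * (1/(Nat.totient d:ℝ)) := by
      intro d _; rw [one_div_mul_one_div]
    rw [Finset.sum_congr rfl heq, ← Finset.mul_sum]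
    rw [one_div_mul_eq_div, div_le_div_iff₀ htpos hepos]
    nlinarith [hk]
  calc ∑ e ∈ Icc 1 N, (1:ℝ)/(Nat.totient e)
      ≤ ∑ e ∈ Icc 1 N, ∑ d ∈ e.divisors, 1/((e:ℝ) * Nat.totient d) :=
        Finset.sum_le_sum step1
    _ = ∑ f ∈ Icc 1 N, ∑ e ∈ (Icc 1 N).filter (f ∣ ·), 1/((e:ℝ) * Nat.totient f) :=
        swap_divisor_sum N (fun e f => 1/((e:ℝ) * Nat.totient f))
    _ ≤ ∑ f ∈ Icc 1 N, ∑ j ∈ Icc 1 N, 1/(((f*j:ℕ):ℝ) * Nat.totient f) := by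
        refine Finset.sum_le_sum fun f hf => ?_
        exact sum_multiples_le hf (fun e => 1/((e:ℝ) * Nat.totient f)) (fun j => by positivity)
    _ = ∑ f ∈ Icc 1 N, (1/((f:ℝ) * Nat.totient f)) * ∑ j ∈ Icc 1 N, 1/(j:ℝ) := by
        refine Finset.sum_congr rfl fun f _ => ?_
        rw [Finset.mul_sum]
        refine Finset.sum_congr rfl fun j _ => ?_
        push_cast
        rw [one_div_mul_one_div]
        ring_nf
    _ ≤ ∑ f ∈ Icc 1 N, (1/((f:ℝ) * Nat.totient f)) * (1 + Real.log N) := by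
        refine Finset.sum_le_sum fun f _ => ?_
        refine mul_le_mul_of_nonneg_left ?_ (by positivity)
        simpa using harm_Icc N
    _ = (∑ f ∈ Icc 1 N, 1/((f:ℝ) * Nat.totient f)) * (1 + Real.log N) := by
        rw [← Finset.sum_mul]
    _ ≤ 4 * (1 + Real.log N) := by
        refine mul_le_mul_of_nonneg_right ?_ hlog
        exact_mod_cast sum_inv_mul_totient N


lemma ap_sum_le (N k f : ℕ) (hN : 1 ≤ N) (hk : 1 ≤ k) (hf : 1 ≤ f)
    (M : Finset ℕ) (hM : M ⊆ Icc 1 N)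
    (hcong : ∀ m ∈ M, f ∣ k * m - 1) :
    ∑ m ∈ M, (1:ℝ)/((k:ℝ)*m) ≤ 1/k + (1 + Real.log N)/((k:ℝ)*f) := by
  have hlog : (0:ℝ) ≤ 1 + Real.log N := by
    have : (1:ℝ) ≤ N := by exact_mod_cast hN
    linarith [Real.log_nonneg this]
  have hkR : (0:ℝ) < k := by exact_mod_cast hk
  have hfR : (0:ℝ) < f := by exact_mod_cast hf
  rcases M.eq_empty_or_nonempty with rfl | hne
  · simp only [Finset.sum_empty]
    positivity
  set m₀ := M.min' hne with hm₀def
  have hm₀M : m₀ ∈ M := M.min'_mem hne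
  have hm₀1 : 1 ≤ m₀ := (mem_Icc.1 (hM hm₀M)).1
  -- coprimality of f and k
  have hco : Nat.Coprime f k := by
    have h2 := hcong m₀ hm₀M
    have h3 : Nat.gcd f k ∣ 1 := by
      have hd1 : Nat.gcd f k ∣ k * m₀ - 1 := (Nat.gcd_dvd_left f k).trans h2
      have hd2 : Nat.gcd f k ∣ k * m₀ := (Nat.gcd_dvd_right f k).mul_right m₀
      have : k * m₀ - (k * m₀ - 1) = 1 := by
        have : 1 ≤ k * m₀ := Nat.one_le_iff_ne_zero.2 (by positivity)
        omega
      exact this ▸ Nat.dvd_sub hd2 hd1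
    exact Nat.eq_one_of_dvd_one h3
  -- every element is ≡ m₀ mod f
  have hdvd : ∀ m ∈ M, f ∣ m - m₀ := by
    intro m hm
    have hge : m₀ ≤ m := M.min'_le m hm
    have h1 := hcong m hm
    have h2 := hcong m₀ hm₀M
    have h3 : f ∣ k * m - k * m₀ := by
      have heq : (k * m - 1) - (k * m₀ - 1) = k * m - k * m₀ := by
        have h4 : 1 ≤ k * m₀ := Nat.one_le_iff_ne_zero.2 (by positivity)
        have h5 : k * m₀ ≤ k * m := Nat.mul_le_mul_left k hge
        omega
      exact heq ▸ Nat.dvd_sub h1 h2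
    rw [← Nat.mul_sub] at h3
    exact hco.dvd_of_dvd_mul_left h3
  rw [← Finset.add_sum_erase M _ hm₀M]
  have hterm1 : (1:ℝ)/((k:ℝ)*m₀) ≤ 1/k := by
    apply one_div_le_one_div_of_le hkR
    have : (1:ℝ) ≤ (m₀:ℝ) := by exact_mod_cast hm₀1
    nlinarith
  have hterm2 : ∑ m ∈ M.erase m₀, (1:ℝ)/((k:ℝ)*m) ≤ (1 + Real.log N)/((k:ℝ)*f) := by
    have hj : ∀ m ∈ M.erase m₀, f * ((m - m₀)/f) = m - m₀ ∧ 1 ≤ (m - m₀)/f ∧ (m - m₀)/f ≤ N := by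
      intro m hm
      rw [Finset.mem_erase] at hm
      have hmM := hm.2
      have hge : m₀ ≤ m := M.min'_le m hmM
      have hgt : m₀ < m := lt_of_le_of_ne hge (Ne.symm hm.1)
      have hd := hdvd m hmM
      have heq := Nat.mul_div_cancel' hd
      have hfle : f ≤ m - m₀ := Nat.le_of_dvd (by omega) hd
      refine ⟨heq, ?_, ?_⟩
      · exact (Nat.one_le_div_iff (by omega)).2 hfle
      · calc (m - m₀)/f ≤ m - m₀ := Nat.div_le_self _ _
          _ ≤ N := le_trans (by omega) (mem_Icc.1 (hM hmM)).2
    calc ∑ m ∈ M.erase m₀, (1:ℝ)/((k:ℝ)*m)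
        ≤ ∑ m ∈ M.erase m₀, (1:ℝ)/((k:ℝ)*((f * ((m - m₀)/f) : ℕ):ℝ)) := by
          refine Finset.sum_le_sum fun m hm => ?_
          obtain ⟨heq, hj1, hjN⟩ := hj m hm
          have hpos : 0 < f * ((m - m₀)/f) := by positivity
          have hposR : (0:ℝ) < ((f * ((m - m₀)/f) : ℕ):ℝ) := by exact_mod_cast hpos
          apply one_div_le_one_div_of_le (by positivity)
          have hmm : f * ((m - m₀)/f) ≤ m := by omega
          have hmmR : ((f * ((m - m₀)/f) : ℕ):ℝ) ≤ (m:ℝ) := by exact_mod_cast hmm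
          nlinarith
      _ = ∑ j ∈ (M.erase m₀).image (fun m => (m - m₀)/f), (1:ℝ)/((k:ℝ)*((f*j:ℕ):ℝ)) := by
          rw [Finset.sum_image]
          intro a ha b hb hab
          obtain ⟨hea, -, -⟩ := hj a ha
          obtain ⟨heb, -, -⟩ := hj b hb
          have haM := (Finset.mem_erase.1 ha).2
          have hbM := (Finset.mem_erase.1 hb).2
          have hga : m₀ ≤ a := M.min'_le a haM
          have hgb : m₀ ≤ b := M.min'_le b hbM
          rw [show (a - m₀) / f = (b - m₀) / f from hab] at hea
          omega
      _ ≤ ∑ j ∈ Icc 1 N, (1:ℝ)/((k:ℝ)*((f*j:ℕ):ℝ)) := by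
          refine Finset.sum_le_sum_of_subset_of_nonneg ?_ (fun j _ _ => by positivity)
          intro j hjm
          obtain ⟨m, hm, rfl⟩ := Finset.mem_image.1 hjm
          obtain ⟨-, h1, h2⟩ := hj m hm
          exact mem_Icc.2 ⟨h1, h2⟩
      _ = (1/((k:ℝ)*f)) * ∑ j ∈ Icc 1 N, (1:ℝ)/j := by
          rw [Finset.mul_sum]
          refine Finset.sum_congr rfl fun j _ => ?_
          push_cast
          rw [one_div_mul_one_div]
          ring_nf
      _ ≤ (1/((k:ℝ)*f)) * (1 + Real.log N) := by
          exact mul_le_mul_of_nonneg_left (harm_Icc N) (by positivity)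
      _ = (1 + Real.log N)/((k:ℝ)*f) := by ring
  linarith

end SumInvTotientAux

open SumInvTotientAux in
/-- `∑_{2 ≤ acum ≤ x} 1/φ(acum − 1) ≪ (log x)⁴`, summed over quadruples of positive
integers `(a, c, u, m)`. -/
theorem sum_inv_totient_quadruples :
    ∃ C : ℝ, 0 < C ∧ ∃ x₀ : ℝ, ∀ x : ℝ, x₀ ≤ x →
      ∑ q ∈ ((Finset.Icc 1 ⌊x⌋₊ ×ˢ Finset.Icc 1 ⌊x⌋₊ ×ˢ Finset.Icc 1 ⌊x⌋₊ ×ˢ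
            Finset.Icc 1 ⌊x⌋₊).filter
          (fun q : ℕ × ℕ × ℕ × ℕ =>
            2 ≤ q.1 * q.2.1 * q.2.2.1 * q.2.2.2 ∧
              ((q.1 * q.2.1 * q.2.2.1 * q.2.2.2 : ℕ) : ℝ) ≤ x)),
        (1 : ℝ) / (Nat.totient (q.1 * q.2.1 * q.2.2.1 * q.2.2.2 - 1) : ℝ) ≤
      C * (Real.log x) ^ 4 := by
  refine ⟨256, by norm_num, 3, fun x hx => ?_⟩
  set N := ⌊x⌋₊ with hNdef
  set P := Icc 1 N with hPdef
  set H : ℝ := 1 + Real.log N with hHdef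
  have hx0 : (0:ℝ) ≤ x := by linarith
  have hN3 : 3 ≤ N := Nat.le_floor (by exact_mod_cast hx)
  have hN1 : 1 ≤ N := by omega
  have hNR : (1:ℝ) ≤ N := by exact_mod_cast hN1
  have hH1 : (1:ℝ) ≤ H := by
    have := Real.log_nonneg hNR
    rw [hHdef]; linarith
  have hH0 : (0:ℝ) ≤ H := by linarith
  set Q := ((P ×ˢ P ×ˢ P ×ˢ P).filter
      (fun q : ℕ × ℕ × ℕ × ℕ =>
        2 ≤ q.1 * q.2.1 * q.2.2.1 * q.2.2.2 ∧
          ((q.1 * q.2.1 * q.2.2.1 * q.2.2.2 : ℕ) : ℝ) ≤ x)) with hQdef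
  -- basic facts about members of Q
  have hQmem : ∀ q ∈ Q, 2 ≤ q.1 * q.2.1 * q.2.2.1 * q.2.2.2 ∧
      q.1 * q.2.1 * q.2.2.1 * q.2.2.2 ≤ N := by
    intro q hq
    rw [hQdef, Finset.mem_filter] at hq
    exact ⟨hq.2.1, Nat.le_floor hq.2.2⟩
  -- Step A : pointwise bound by divisor sum
  have stepA : ∀ q ∈ Q,
      (1 : ℝ) / (Nat.totient (q.1 * q.2.1 * q.2.2.1 * q.2.2.2 - 1) : ℝ) ≤
        ∑ f ∈ P, if f ∣ q.1 * q.2.1 * q.2.2.1 * q.2.2.2 - 1 then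
          (2 / (Nat.totient f : ℝ)) * (1 / ((q.1 * q.2.1 * q.2.2.1 * q.2.2.2 : ℕ) : ℝ))
          else 0 := by
    intro q hq
    obtain ⟨hn2, hnN⟩ := hQmem q hq
    set n := q.1 * q.2.1 * q.2.2.1 * q.2.2.2 with hn
    have hsum : (∑ f ∈ P, if f ∣ n - 1 then
        (2 / (Nat.totient f : ℝ)) * (1 / ((n:ℕ):ℝ)) else 0)
        = ∑ f ∈ (n-1).divisors, (2 / (Nat.totient f : ℝ)) * (1 / ((n:ℕ):ℝ)) := by
      rw [divisors_eq_filter_Icc (m := n-1) (N := N) (by omega) (by omega),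
        Finset.sum_filter]
    rw [hsum]
    have hkey := key (n-1) (by omega)
    set D := ∑ d ∈ (n-1).divisors, 1 / (Nat.totient d : ℝ) with hD
    have hD0 : 0 ≤ D := by
      rw [hD]; exact Finset.sum_nonneg fun d _ => by positivity
    have heq : ∑ f ∈ (n-1).divisors, (2 / (Nat.totient f : ℝ)) * (1 / ((n:ℕ):ℝ))
        = (2 / ((n:ℕ):ℝ)) * D := by
      rw [hD, Finset.mul_sum]
      refine Finset.sum_congr rfl fun d _ => ?_
      rw [div_mul_div_comm, div_mul_div_comm]
      ring_nf
    rw [heq]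
    have htot : (0:ℝ) < (Nat.totient (n-1) : ℝ) := by
      exact_mod_cast Nat.totient_pos.2 (show 0 < n - 1 by omega)
    have hn1R : (0:ℝ) < ((n:ℕ):ℝ) - 1 := by
      have : (2:ℝ) ≤ ((n:ℕ):ℝ) := by exact_mod_cast hn2
      linarith
    have hnR : (0:ℝ) < ((n:ℕ):ℝ) := by linarith
    have hkey' : ((n:ℕ):ℝ) - 1 ≤ (Nat.totient (n-1) : ℝ) * D := by
      have : (((n-1 : ℕ)):ℝ) = ((n:ℕ):ℝ) - 1 := by
        have : (1:ℕ) ≤ n := by omega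
        push_cast [this]; ring
      rw [← this]; exact hkey
    rw [div_le_iff₀ htot]
    have h2n : ((n:ℕ):ℝ) ≤ 2 * (((n:ℕ):ℝ) - 1) := by
      have : (2:ℝ) ≤ ((n:ℕ):ℝ) := by exact_mod_cast hn2
      linarith
    have expand : 2 / ((n:ℕ):ℝ) * D * (Nat.totient (n-1):ℝ)
        = 2 * ((Nat.totient (n-1):ℝ) * D) / ((n:ℕ):ℝ) := by ring
    rw [expand, le_div_iff₀ hnR]
    nlinarith
  -- Step 2: swap sums
  have step2 : ∑ q ∈ Q, (1:ℝ)/(Nat.totient (q.1*q.2.1*q.2.2.1*q.2.2.2 - 1):ℝ)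
      ≤ ∑ f ∈ P, ∑ q ∈ Q,
          (if f ∣ q.1*q.2.1*q.2.2.1*q.2.2.2 - 1 then
            (2/(Nat.totient f : ℝ)) * ((1:ℝ)/((q.1*q.2.1*q.2.2.1*q.2.2.2 : ℕ):ℝ)) else 0) := by
    refine (Finset.sum_le_sum stepA).trans ?_
    rw [Finset.sum_comm]
  -- Step B: bound for each f
  have stepB : ∀ f ∈ P,
      ∑ q ∈ Q, (if f ∣ q.1*q.2.1*q.2.2.1*q.2.2.2 - 1 then
            (2/(Nat.totient f : ℝ)) * ((1:ℝ)/((q.1*q.2.1*q.2.2.1*q.2.2.2 : ℕ):ℝ)) else 0)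
        ≤ (2/(Nat.totient f : ℝ)) * (H^3 + H^4/f) := by
    intro f hf
    have hf1 : 1 ≤ f := (mem_Icc.1 hf).1
    have hfR : (0:ℝ) < f := by exact_mod_cast hf1
    have hpull : ∑ q ∈ Q, (if f ∣ q.1*q.2.1*q.2.2.1*q.2.2.2 - 1 then
            (2/(Nat.totient f : ℝ)) * ((1:ℝ)/((q.1*q.2.1*q.2.2.1*q.2.2.2 : ℕ):ℝ)) else 0)
        = (2/(Nat.totient f : ℝ)) * ∑ q ∈ Q, (if f ∣ q.1*q.2.1*q.2.2.1*q.2.2.2 - 1 then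
            ((1:ℝ)/((q.1*q.2.1*q.2.2.1*q.2.2.2 : ℕ):ℝ)) else 0) := by
      rw [Finset.mul_sum]
      refine Finset.sum_congr rfl fun q _ => ?_
      split_ifs <;> ring
    rw [hpull]
    refine mul_le_mul_of_nonneg_left ?_ (by positivity)
    have key4 : ∑ q ∈ Q, (if f ∣ q.1*q.2.1*q.2.2.1*q.2.2.2 - 1 then
            ((1:ℝ)/((q.1*q.2.1*q.2.2.1*q.2.2.2 : ℕ):ℝ)) else 0)
        = ∑ a ∈ P, ∑ c ∈ P, ∑ u ∈ P, ∑ m ∈ P,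
            (if (2 ≤ a*c*u*m ∧ ((a*c*u*m : ℕ):ℝ) ≤ x) ∧ f ∣ a*c*u*m - 1
             then (1:ℝ)/((a*c*u*m : ℕ):ℝ) else 0) := by
      rw [hQdef, Finset.sum_filter]
      simp only [Finset.sum_product]
      refine Finset.sum_congr rfl fun a _ => ?_
      refine Finset.sum_congr rfl fun c _ => ?_
      refine Finset.sum_congr rfl fun u _ => ?_
      refine Finset.sum_congr rfl fun m _ => ?_
      split_ifs <;> tauto
    rw [key4]

    set T := ∑ j ∈ P, (1:ℝ)/j with hTdef
    have hT : T ≤ H := harm_Icc N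
    have hT0 : 0 ≤ T := Finset.sum_nonneg fun j _ => by positivity
    have hinner : ∀ a ∈ P, ∀ c ∈ P, ∀ u ∈ P,
        ∑ m ∈ P, (if (2 ≤ a*c*u*m ∧ ((a*c*u*m : ℕ):ℝ) ≤ x) ∧ f ∣ a*c*u*m - 1
             then (1:ℝ)/((a*c*u*m : ℕ):ℝ) else 0)
          ≤ (1:ℝ)/(a:ℝ) * ((1:ℝ)/(c:ℝ) * ((1:ℝ)/(u:ℝ) * (1 + H/f))) := by
      intro a ha c hc u hu
      have ha1 : 1 ≤ a := (mem_Icc.1 ha).1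
      have hc1 : 1 ≤ c := (mem_Icc.1 hc).1
      have hu1 : 1 ≤ u := (mem_Icc.1 hu).1
      have hk1 : 1 ≤ a*c*u := Nat.mul_pos (Nat.mul_pos ha1 hc1) hu1
      rw [← Finset.sum_filter]
      set M := P.filter (fun m => (2 ≤ a*c*u*m ∧ ((a*c*u*m : ℕ):ℝ) ≤ x) ∧ f ∣ a*c*u*m - 1)
        with hMdef
      have hcong : ∀ m ∈ M, f ∣ (a*c*u) * m - 1 := by
        intro m hm
        rw [hMdef, Finset.mem_filter] at hm
        exact hm.2.2
      have hap := ap_sum_le N (a*c*u) f hN1 hk1 hf1 M (Finset.filter_subset _ _) hcong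
      have hre : ∑ m ∈ M, (1:ℝ)/((a*c*u*m : ℕ):ℝ)
          = ∑ m ∈ M, (1:ℝ)/(((a*c*u : ℕ):ℝ) * (m:ℝ)) := by
        refine Finset.sum_congr rfl fun m _ => ?_
        push_cast
        ring_nf
      rw [hre]
      refine hap.trans (le_of_eq ?_)
      have haR : (0:ℝ) < a := by exact_mod_cast ha1
      have hcR : (0:ℝ) < c := by exact_mod_cast hc1
      have huR : (0:ℝ) < u := by exact_mod_cast hu1
      push_cast
      field_simp
      ring_nf
      rw [hHdef]; ring
    calc ∑ a ∈ P, ∑ c ∈ P, ∑ u ∈ P, ∑ m ∈ P,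
            (if (2 ≤ a*c*u*m ∧ ((a*c*u*m : ℕ):ℝ) ≤ x) ∧ f ∣ a*c*u*m - 1
             then (1:ℝ)/((a*c*u*m : ℕ):ℝ) else 0)
        ≤ ∑ a ∈ P, ∑ c ∈ P, ∑ u ∈ P,
            ((1:ℝ)/(a:ℝ) * ((1:ℝ)/(c:ℝ) * ((1:ℝ)/(u:ℝ) * (1 + H/f)))) := by
          refine Finset.sum_le_sum fun a ha => Finset.sum_le_sum fun c hc =>
            Finset.sum_le_sum fun u hu => hinner a ha c hc u hu
      _ = T * (T * (T * (1 + H/f))) := by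
          simp only [← Finset.mul_sum]
          rw [← Finset.sum_mul, ← Finset.sum_mul, ← Finset.sum_mul]
      _ ≤ H^3 + H^4/f := by
          have h3 : T^3 ≤ H^3 := pow_le_pow_left₀ hT0 hT 3
          have hK0 : (0:ℝ) ≤ 1 + H/f := by positivity
          calc T * (T * (T * (1 + H/f))) = T^3 * (1 + H/f) := by ring
            _ ≤ H^3 * (1 + H/f) := mul_le_mul_of_nonneg_right h3 hK0
            _ = H^3 + H^4/f := by field_simp
  -- final assembly
  have hlogx1 : (1:ℝ) ≤ Real.log x := by
    rw [Real.le_log_iff_exp_le (by linarith : (0:ℝ) < x)]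
    have := Real.exp_one_lt_d9
    linarith
  have hNlex : (N:ℝ) ≤ x := Nat.floor_le hx0
  have hlogN : Real.log N ≤ Real.log x := Real.log_le_log (by linarith) hNlex
  have hH2 : H ≤ 2 * Real.log x := by rw [hHdef]; linarith
  calc ∑ q ∈ Q, (1:ℝ)/(Nat.totient (q.1*q.2.1*q.2.2.1*q.2.2.2 - 1):ℝ)
      ≤ ∑ f ∈ P, ∑ q ∈ Q,
          (if f ∣ q.1*q.2.1*q.2.2.1*q.2.2.2 - 1 then
            (2/(Nat.totient f : ℝ)) * ((1:ℝ)/((q.1*q.2.1*q.2.2.1*q.2.2.2 : ℕ):ℝ)) else 0) := step2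
    _ ≤ ∑ f ∈ P, (2/(Nat.totient f : ℝ)) * (H^3 + H^4/f) := Finset.sum_le_sum stepB
    _ = ∑ f ∈ P, (2*H^3*((1:ℝ)/(Nat.totient f : ℝ))
          + 2*H^4*((1:ℝ)/((f:ℝ)*(Nat.totient f : ℝ)))) := by
          refine Finset.sum_congr rfl fun f hf => ?_
          have hf1 : 1 ≤ f := (mem_Icc.1 hf).1
          have hfR : (0:ℝ) < f := by exact_mod_cast hf1
          have htR : (0:ℝ) < (Nat.totient f : ℝ) := by
            exact_mod_cast Nat.totient_pos.2 hf1
          field_simp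
    _ = 2*H^3*(∑ f ∈ P, (1:ℝ)/(Nat.totient f : ℝ))
          + 2*H^4*(∑ f ∈ P, (1:ℝ)/((f:ℝ)*(Nat.totient f : ℝ))) := by
          rw [Finset.sum_add_distrib, ← Finset.mul_sum, ← Finset.mul_sum]
    _ ≤ 2*H^3*(4*H) + 2*H^4*4 := by
          refine add_le_add ?_ ?_
          · exact mul_le_mul_of_nonneg_left (sum_inv_totient_le N) (by positivity)
          · exact mul_le_mul_of_nonneg_left (sum_inv_mul_totient N) (by positivity)
    _ = 16*H^4 := by ring
    _ ≤ 256 * (Real.log x)^4 := by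
          have hp := pow_le_pow_left₀ hH0 hH2 4
          calc (16:ℝ)*H^4 ≤ 16*(2*Real.log x)^4 := by linarith
            _ = 256 * (Real.log x)^4 := by ring
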